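/- Algebraically weighted total Laplacian spectra of cubes: Let n ≥ 1 and let q_i, x_i, y_i (1 ≤ i ≤ n) be real numbers with x_i ≠ 0 and y_i ≠ 0 for all i. For C ⊆ {1,…,n} set u_C = Σ_{j∈C} (q_j²/x_j² + q_j²/y_j²). Then for every 0 ≤ k ≤ n, the characteristic polynomial of the weighted total Laplacian L̂^tot_k(Q_n) = ∂̂_{k+1}∂̂_{k+1}^T + ∂̂_k^T ∂̂_k equals ∏_{C ⊆ {1,…,n}} (y − u_C)^{binom(|C|,k)}, where binom(|C|,k) = 0 when |C| < k. -/
import Mathlib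


open BigOperators Matrix

namespace CubicalPaper

/-- Faces of the `n`-cube `Q_n`: tuples in `{0, 1, ✱}ⁿ`, with `2 : Fin 3` playing the
role of `✱`. -/
abbrev Face (n : ℕ) : Type := Fin n → Fin 3

/-- The direction set of a face: the coordinates equal to `✱`. -/
def dir {n : ℕ} (f : Face n) : Finset (Fin n) := Finset.univ.filter fun i => f i = 2

/-- The dimension of a face. -/
def fdim {n : ℕ} (f : Face n) : ℕ := (dir f).card

/-- The partial order on `Q_n`: `f ≤ g` iff `f i = g i` whenever `g i ≠ ✱`. -/
def cubeLE {n : ℕ} (f g : Face n) : Prop := ∀ i, g i ≠ 2 → f i = g i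

/-- A proper cubical complex: a downward-closed set of faces of `Q_n`. -/
def IsComplex {n : ℕ} (X : Finset (Face n)) : Prop :=
  ∀ g ∈ X, ∀ f, cubeLE f g → f ∈ X

/-- The incidence sign `ε(f, g)`: if `dir g = {a_1 < ⋯ < a_i}` and `f` is obtained from
`g` by changing the entry `g (a_j) = ✱` to `0` (resp. `1`), then `ε(f,g) = (-1)^j`
(resp. `(-1)^(j+1)`); in all other cases `ε(f,g) = 0`. -/
def eps {n : ℕ} (f g : Face n) : ℤ :=
  ∑ a : Fin n,
    if g a = 2 ∧ f a ≠ 2 ∧ ∀ b, b ≠ a → f b = g b then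
      (-1 : ℤ) ^ ((Finset.univ.filter fun b => g b = 2 ∧ b ≤ a).card +
        if f a = 1 then 1 else 0)
    else 0

/-- The `k`-dimensional faces of `X`. -/
def faceSet {n : ℕ} (X : Finset (Face n)) (k : ℕ) : Finset (Face n) :=
  X.filter fun f => fdim f = k

/-- The real cubical boundary matrix `∂_{k+1}` of `X`, with rows indexed by `X_k`
and columns by `X_{k+1}`, entries `ε(f, g)`. -/
def bdryM {n : ℕ} (X : Finset (Face n)) (k : ℕ) :
    Matrix {f // f ∈ faceSet X k} {g // g ∈ faceSet X (k + 1)} ℝ :=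
  Matrix.of fun f g => (eps f.1 g.1 : ℝ)

/-- The up-down Laplacian `L^ud_k = ∂_{k+1} ∂_{k+1}^T`. -/
noncomputable def Lud {n : ℕ} (X : Finset (Face n)) (k : ℕ) :
    Matrix {f // f ∈ faceSet X k} {f // f ∈ faceSet X k} ℝ :=
  bdryM X k * (bdryM X k)ᵀ

/-- The down-up Laplacian `L^du_k = ∂_k^T ∂_k` (with `∂_0 = 0`). -/
noncomputable def Ldu {n : ℕ} (X : Finset (Face n)) :
    (k : ℕ) → Matrix {f // f ∈ faceSet X k} {f // f ∈ faceSet X k} ℝ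
  | 0 => 0
  | (j + 1) => (bdryM X j)ᵀ * bdryM X j

/-- The total Laplacian `L^tot_k = L^ud_k + L^du_k`. -/
noncomputable def Ltot {n : ℕ} (X : Finset (Face n)) (k : ℕ) :
    Matrix {f // f ∈ faceSet X k} {f // f ∈ faceSet X k} ℝ :=
  Lud X k + Ldu X k

/-- The spectrum `s^tot_k(X)` of `L^tot_k`: the multiset of roots of its characteristic
polynomial (all of which are real, `L^tot_k` being real symmetric). -/
noncomputable def stot {n : ℕ} (X : Finset (Face n)) (k : ℕ) : Multiset ℝ :=
  (Ltot X k).charpoly.roots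

/-- The spectrum `s^ud_k(X)` of `L^ud_k`. -/
noncomputable def sud {n : ℕ} (X : Finset (Face n)) (k : ℕ) : Multiset ℝ :=
  (Lud X k).charpoly.roots

/-- The algebraically weighted cubical boundary matrix `∂̂_{k+1}` of the full cube
`Q_n`: the `(f, g)` entry is `ε(f,g) · q a / x a` if `f` is obtained from `g` by
changing the `✱` in position `a` to `0`, and `ε(f,g) · q a / y a` if it is changed
to `1`. -/
noncomputable def wbdryM {n : ℕ} (q x y : Fin n → ℝ) (k : ℕ) :
    Matrix {f // f ∈ faceSet (Finset.univ : Finset (Face n)) k}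
      {g // g ∈ faceSet (Finset.univ : Finset (Face n)) (k + 1)} ℝ :=
  Matrix.of fun f g =>
    (eps f.1 g.1 : ℝ) *
      ∑ a : Fin n,
        if g.1 a = 2 ∧ f.1 a ≠ 2 ∧ ∀ b, b ≠ a → f.1 b = g.1 b then
          (if f.1 a = 0 then q a / x a else q a / y a)
        else 0

/-- The weighted up-down Laplacian `L̂^ud_k = ∂̂_{k+1} ∂̂_{k+1}^T` of `Q_n`. -/
noncomputable def wLud {n : ℕ} (q x y : Fin n → ℝ) (k : ℕ) :
    Matrix {f // f ∈ faceSet (Finset.univ : Finset (Face n)) k}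
      {f // f ∈ faceSet (Finset.univ : Finset (Face n)) k} ℝ :=
  wbdryM q x y k * (wbdryM q x y k)ᵀ

/-- The weighted down-up Laplacian `L̂^du_k = ∂̂_k^T ∂̂_k` of `Q_n` (with `∂̂_0 = 0`). -/
noncomputable def wLdu {n : ℕ} (q x y : Fin n → ℝ) :
    (k : ℕ) → Matrix {f // f ∈ faceSet (Finset.univ : Finset (Face n)) k}
      {f // f ∈ faceSet (Finset.univ : Finset (Face n)) k} ℝ
  | 0 => 0
  | (j + 1) => (wbdryM q x y j)ᵀ * wbdryM q x y j

/-- The weighted total Laplacian `L̂^tot_k = L̂^ud_k + L̂^du_k` of `Q_n`. -/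
noncomputable def wLtot {n : ℕ} (q x y : Fin n → ℝ) (k : ℕ) :
    Matrix {f // f ∈ faceSet (Finset.univ : Finset (Face n)) k}
      {f // f ∈ faceSet (Finset.univ : Finset (Face n)) k} ℝ :=
  wLud q x y k + wLdu q x y k

section AuxA
variable {n : ℕ}

abbrev Adj (a : Fin n) (f g : Face n) : Prop :=
  g a = 2 ∧ f a ≠ 2 ∧ ∀ b, b ≠ a → f b = g b

def Ncnt (g : Face n) (a : Fin n) : ℕ :=
  (Finset.univ.filter fun b => g b = 2 ∧ b ≤ a).card

lemma adj_unique {a a' : Fin n} {f g : Face n} (h : Adj a f g) (h' : Adj a' f g) :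
    a = a' := by
  by_contra hne
  exact h.2.1 ((h'.2.2 a hne).trans h.1)

lemma adj_iff_up {a : Fin n} {f g : Face n} :
    Adj a f g ↔ f a ≠ 2 ∧ g = Function.update f a 2 := by
  constructor
  · rintro ⟨h1, h2, h3⟩
    refine ⟨h2, funext fun b => ?_⟩
    rcases eq_or_ne b a with rfl | hb
    · simpa using h1
    · rw [Function.update_of_ne hb]; exact (h3 b hb).symm
  · rintro ⟨h2, rfl⟩
    refine ⟨by simp, h2, fun b hb => by rw [Function.update_of_ne hb]⟩

lemma adj_iff_down {a : Fin n} {e f : Face n} :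
    Adj a e f ↔ f a = 2 ∧ e a ≠ 2 ∧ e = Function.update f a (e a) := by
  constructor
  · rintro ⟨h1, h2, h3⟩
    refine ⟨h1, h2, funext fun b => ?_⟩
    rcases eq_or_ne b a with rfl | hb
    · simp
    · rw [Function.update_of_ne hb]; exact h3 b hb
  · rintro ⟨h1, h2, he⟩
    refine ⟨h1, h2, fun b hb => by rw [he, Function.update_of_ne hb]⟩

lemma sum_ite_unique {α M : Type*} [Fintype α] [AddCommMonoid M] (P : α → Prop)
    [DecidablePred P] (a0 : α) (h : ∀ a, P a → a = a0) (X : α → M) :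
    (∑ a, if P a then X a else 0) = if P a0 then X a0 else 0 := by
  rw [Finset.sum_eq_single a0]
  · intro b _ hb; rw [if_neg fun hP => hb (h b hP)]
  · simp

lemma mul_sum_ite_unique {α : Type*} [Fintype α] (P : α → Prop) [DecidablePred P]
    (h : ∀ a b, P a → P b → a = b) (u v : α → ℝ) :
    (∑ a, if P a then u a else 0) * (∑ a, if P a then v a else 0) =
      ∑ a, if P a then u a * v a else 0 := by
  by_cases he : ∃ a, P a
  · obtain ⟨a0, ha0⟩ := he
    rw [sum_ite_unique P a0 (fun a ha => h a a0 ha ha0),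
      sum_ite_unique P a0 (fun a ha => h a a0 ha ha0),
      sum_ite_unique P a0 (fun a ha => h a a0 ha ha0),
      if_pos ha0, if_pos ha0, if_pos ha0]
  · push_neg at he
    simp [he]

lemma fdim_adj {a : Fin n} {f g : Face n} (h : Adj a f g) : fdim g = fdim f + 1 := by
  obtain ⟨h1, h2, h3⟩ := h
  have hd : dir g = insert a (dir f) := by
    ext b
    simp only [dir, Finset.mem_filter, Finset.mem_univ, true_and, Finset.mem_insert]
    constructor
    · intro hb
      rcases eq_or_ne b a with rfl | hba
      · exact Or.inl rfl
      · exact Or.inr ((h3 b hba) ▸ hb)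
    · rintro (rfl | hb)
      · exact h1
      · by_cases hba : b = a
        · subst hba; exact h1
        · exact (h3 b hba).symm ▸ hb
  have ha : a ∉ dir f := by simp [dir, h2]
  rw [fdim, fdim, hd, Finset.card_insert_of_notMem ha]

lemma ncnt_update (f : Face n) (a c : Fin n) (v : Fin 3) :
    Ncnt (Function.update f a v) c + (if a ≤ c ∧ f a = 2 then 1 else 0) =
      Ncnt f c + (if a ≤ c ∧ v = 2 then 1 else 0) := by
  classical
  rw [Ncnt, Ncnt, Finset.card_filter, Finset.card_filter,
    ← Finset.sum_erase_add _ _ (Finset.mem_univ a),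
    ← Finset.sum_erase_add _ _ (Finset.mem_univ a)]
  rw [Finset.sum_congr rfl (fun b hb => by
    rw [Function.update_of_ne (Finset.mem_erase.mp hb).1] :
      ∀ b ∈ Finset.univ.erase a,
        (if Function.update f a v b = 2 ∧ b ≤ c then 1 else 0) =
          (if f b = 2 ∧ b ≤ c then 1 else 0))]
  simp only [Function.update_self]
  by_cases h1 : a ≤ c <;> by_cases h2 : v = 2 <;> by_cases h3 : f a = 2 <;>
    simp [h1, h2, h3]

lemma neg_one_pow_ncnt_update (f : Face n) (a c : Fin n) (v : Fin 3) :
    ((-1 : ℝ)) ^ (Ncnt (Function.update f a v) c) *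
        (-1) ^ (if a ≤ c ∧ f a = 2 then 1 else 0) =
      (-1) ^ (Ncnt f c) * (-1) ^ (if a ≤ c ∧ v = 2 then 1 else 0) := by
  rw [← pow_add, ← pow_add, ncnt_update]

lemma neg_one_pow_twice (A i j : ℕ) :
    ((-1 : ℝ)) ^ (A + i) * (-1) ^ (A + j) = (-1) ^ (i + j) := by
  rw [← pow_add, show A + i + (A + j) = 2 * A + (i + j) by ring, pow_add, pow_mul,
    neg_one_sq, one_pow, one_mul]

variable (q x y : Fin n → ℝ)

noncomputable def sw (a : Fin n) (f g : Face n) : ℝ :=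
  (-1 : ℝ) ^ (Ncnt g a + if f a = 1 then 1 else 0) *
    (if f a = 0 then q a / x a else q a / y a)

noncomputable def Bfull (f g : Face n) : ℝ :=
  ∑ a, if Adj a f g then sw q x y a f g else 0

lemma eps_cast (f g : Face n) :
    ((eps f g : ℤ) : ℝ) =
      ∑ a, if Adj a f g then (-1 : ℝ) ^ (Ncnt g a + if f a = 1 then 1 else 0) else 0 := by
  rw [eps, Int.cast_sum]
  apply Finset.sum_congr rfl
  intro a _
  split_ifs <;> simp [Ncnt]

lemma wbdry_apply (k : ℕ) (f : {f // f ∈ faceSet (Finset.univ : Finset (Face n)) k})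
    (g : {g // g ∈ faceSet (Finset.univ : Finset (Face n)) (k + 1)}) :
    wbdryM q x y k f g = Bfull q x y f.1 g.1 := by
  show ((eps f.1 g.1 : ℤ) : ℝ) * _ = _
  rw [eps_cast, Bfull]
  exact mul_sum_ite_unique _ (fun a b ha hb => adj_unique ha hb) _ _

lemma mem_faceSet_univ {f : Face n} {k : ℕ} :
    f ∈ faceSet (Finset.univ : Finset (Face n)) k ↔ fdim f = k := by
  simp [faceSet]

lemma sum_subtype_faceSet (k : ℕ) (F : Face n → ℝ) (hF : ∀ h, F h ≠ 0 → fdim h = k) :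
    (∑ h : {h // h ∈ faceSet (Finset.univ : Finset (Face n)) k}, F h.1) =
      ∑ h : Face n, F h := by
  rw [Finset.sum_coe_sort (faceSet Finset.univ k) F]
  apply Finset.sum_subset (Finset.subset_univ _)
  intro h _ hmem
  by_contra h0
  exact hmem (mem_faceSet_univ.mpr (hF h h0))

lemma bfull_exists_adj {f h : Face n} (hB : Bfull q x y f h ≠ 0) : ∃ a, Adj a f h := by
  by_contra hno
  push_neg at hno
  apply hB
  rw [Bfull]
  exact Finset.sum_eq_zero fun a _ => if_neg (hno a)

lemma wLud_apply (k : ℕ) (f g : {f // f ∈ faceSet (Finset.univ : Finset (Face n)) k}) :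
    wLud q x y k f g = ∑ h : Face n, Bfull q x y f.1 h * Bfull q x y g.1 h := by
  have hf : fdim f.1 = k := mem_faceSet_univ.mp f.2
  rw [wLud, Matrix.mul_apply]
  simp only [Matrix.transpose_apply, wbdry_apply]
  exact sum_subtype_faceSet (k + 1) _ (fun h hne => by
    obtain ⟨a, ha⟩ := bfull_exists_adj q x y (left_ne_zero_of_mul hne)
    rw [fdim_adj ha, hf])

lemma wLdu_apply (k : ℕ) (f g : {f // f ∈ faceSet (Finset.univ : Finset (Face n)) k}) :
    wLdu q x y k f g = ∑ e : Face n, Bfull q x y e f.1 * Bfull q x y e g.1 := by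
  have hf : fdim f.1 = k := mem_faceSet_univ.mp f.2
  cases k with
  | zero =>
    have : ∀ e : Face n, Bfull q x y e f.1 = 0 := by
      intro e
      by_contra h0
      obtain ⟨a, ha⟩ := bfull_exists_adj q x y h0
      have := fdim_adj ha
      omega
    simp only [this, zero_mul, Finset.sum_const_zero]
    rfl
  | succ j =>
    rw [show wLdu q x y (j+1) = (wbdryM q x y j)ᵀ * wbdryM q x y j from rfl,
      Matrix.mul_apply]
    simp only [Matrix.transpose_apply, wbdry_apply]
    exact sum_subtype_faceSet j (fun e => Bfull q x y e f.1 * Bfull q x y e g.1)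
      (fun e hne => by
        have h1 : Bfull q x y e f.1 ≠ 0 := left_ne_zero_of_mul hne
        obtain ⟨a, ha⟩ := bfull_exists_adj q x y h1
        have := fdim_adj ha
        omega)

end AuxA
section AuxB
variable {n : ℕ} (q x y : Fin n → ℝ)

lemma sq_sign (m : ℕ) (w : ℝ) : ((-1 : ℝ) ^ m * w) * ((-1) ^ m * w) = w * w := by
  rw [mul_mul_mul_comm, ← pow_add, show m + m = 2 * m by ring, pow_mul,
    neg_one_sq, one_pow, one_mul]

noncomputable def lam (i : Fin n) : ℝ := (q i / x i) ^ 2 + (q i / y i) ^ 2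

noncomputable def ell (i : Fin n) (r s : Fin 3) : ℝ :=
  if r = 2 then (if s = 2 then lam q x y i else 0)
  else if s = 2 then 0
  else if r = s then (if r = 0 then (q i / x i) ^ 2 else (q i / y i) ^ 2)
  else -((q i / x i) * (q i / y i))

abbrev EqOff (i : Fin n) (f g : Face n) : Prop := ∀ j, j ≠ i → f j = g j

noncomputable def Ut (f g : Face n) (a c : Fin n) : ℝ :=
  if Adj a f (Function.update f a 2) ∧ Adj c g (Function.update f a 2) then
    sw q x y a f (Function.update f a 2) * sw q x y c g (Function.update f a 2)
  else 0

noncomputable def Dt (f g : Face n) (a c : Fin n) : ℝ :=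
  ∑ v : Fin 3,
    if Adj a (Function.update f a v) f ∧ Adj c (Function.update f a v) g then
      sw q x y a (Function.update f a v) f * sw q x y c (Function.update f a v) g
    else 0

lemma U_eq (f g : Face n) :
    ∑ h : Face n, Bfull q x y f h * Bfull q x y g h = ∑ a, ∑ c, Ut q x y f g a c := by
  have step1 : ∀ h : Face n, Bfull q x y f h * Bfull q x y g h =
      ∑ a, ∑ c, if Adj a f h ∧ Adj c g h then sw q x y a f h * sw q x y c g h else 0 := by
    intro h
    rw [Bfull, Bfull, Finset.sum_mul_sum]
    exact Finset.sum_congr rfl fun a _ => Finset.sum_congr rfl fun c _ =>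
      ite_zero_mul_ite_zero _ _ _ _
  simp only [step1]
  rw [Finset.sum_comm]
  refine Finset.sum_congr rfl fun a _ => ?_
  rw [Finset.sum_comm]
  refine Finset.sum_congr rfl fun c _ => ?_
  rw [Ut]
  exact sum_ite_unique _ (Function.update f a 2)
    (fun h hP => (adj_iff_up.mp hP.1).2) _

lemma D_eq (f g : Face n) :
    ∑ e : Face n, Bfull q x y e f * Bfull q x y e g = ∑ a, ∑ c, Dt q x y f g a c := by
  have step1 : ∀ e : Face n, Bfull q x y e f * Bfull q x y e g =
      ∑ a, ∑ c, if Adj a e f ∧ Adj c e g then sw q x y a e f * sw q x y c e g else 0 := by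
    intro e
    rw [Bfull, Bfull, Finset.sum_mul_sum]
    exact Finset.sum_congr rfl fun a _ => Finset.sum_congr rfl fun c _ =>
      ite_zero_mul_ite_zero _ _ _ _
  simp only [step1]
  rw [Finset.sum_comm]
  refine Finset.sum_congr rfl fun a _ => ?_
  rw [Finset.sum_comm]
  refine Finset.sum_congr rfl fun c _ => ?_
  have expand : ∀ e : Face n,
      (if Adj a e f ∧ Adj c e g then sw q x y a e f * sw q x y c e g else 0) =
        ∑ v : Fin 3, if e a = v ∧ Adj a e f ∧ Adj c e g then
          sw q x y a e f * sw q x y c e g else 0 := by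
    intro e
    rw [sum_ite_unique (fun v => e a = v ∧ Adj a e f ∧ Adj c e g) (e a)
      (fun v hv => hv.1.symm)]
    simp
  simp only [expand]
  rw [Finset.sum_comm, Dt]
  refine Finset.sum_congr rfl fun v _ => ?_
  rw [sum_ite_unique (fun e => e a = v ∧ Adj a e f ∧ Adj c e g) (Function.update f a v)
    (fun e he => by rw [← he.1]; exact (adj_iff_down.mp he.2.1).2.2)]
  simp only [Function.update_self, true_and]

lemma K1 (f g : Face n) {a c : Fin n} (hac : a ≠ c) :
    Ut q x y f g a c + Dt q x y f g c a = 0 := by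
  have hca : c ≠ a := Ne.symm hac
  rw [Dt, sum_ite_unique _ (g c) (fun v hv => by
    have h := hv.2.2.2 c hca
    rwa [Function.update_self] at h)]
  rw [Ut]
  by_cases hC : Adj a f (Function.update f a 2) ∧ Adj c g (Function.update f a 2)
  · -- extract structure
    have hfa : f a ≠ 2 := hC.1.2.1
    have hfc : f c = 2 := by
      have := hC.2.1
      rwa [Function.update_of_ne hca] at this
    have hgc : g c ≠ 2 := hC.2.2.1
    have hga : g a = 2 := by
      have := hC.2.2.2 a hac
      rwa [Function.update_self] at this
    have hoff : ∀ b, b ≠ a → b ≠ c → f b = g b := by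
      intro b hba hbc
      have := hC.2.2.2 b hbc
      rw [Function.update_of_ne hba] at this
      exact this.symm
    have hea : Function.update f c (g c) a = f a := Function.update_of_ne hac _ _
    have hD : Adj c (Function.update f c (g c)) f ∧ Adj a (Function.update f c (g c)) g := by
      refine ⟨⟨hfc, by rw [Function.update_self]; exact hgc,
        fun b hb => Function.update_of_ne hb _ _⟩,
        ⟨hga, by rw [hea]; exact hfa, fun b hb => ?_⟩⟩
      rcases eq_or_ne b c with rfl | hbc
      · rw [Function.update_self]
      · rw [Function.update_of_ne hbc]
        exact hoff b hb hbc
    rw [if_pos hC, if_pos hD]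
    -- sign computation
    have hge : g = Function.update (Function.update f c (g c)) a 2 := by
      funext b
      rcases eq_or_ne b a with rfl | hba
      · rw [Function.update_self, hga]
      · rw [Function.update_of_ne hba]
        rcases eq_or_ne b c with rfl | hbc
        · rw [Function.update_self]
        · rw [Function.update_of_ne hbc]
          exact (hoff b hba hbc).symm
    simp only [sw, Function.update_self, Function.update_of_ne hac]
    have e1 : Ncnt (Function.update f a 2) a = Ncnt f a + 1 := by
      have := ncnt_update f a a 2
      simp [hfa] at this
      omega
    by_cases hle : a ≤ c
    · have hnle : ¬ c ≤ a := fun h => hac (le_antisymm hle h)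
      have e2 : Ncnt (Function.update f a 2) c = Ncnt f c + 1 := by
        have := ncnt_update f a c 2
        simp [hle, hfa] at this
        omega
      have e4 : Ncnt (Function.update f c (g c)) a = Ncnt f a := by
        have := ncnt_update f c a (g c)
        simp [hnle] at this
        omega
      have e3 : Ncnt g a = Ncnt f a + 1 := by
        have h5 := congrArg (fun t : Face n => Ncnt t a) hge
        have h6 := ncnt_update (Function.update f c (g c)) a a 2
        have hea2 : Function.update f c (g c) a ≠ 2 := by rw [hea]; exact hfa
        simp [hea2] at h6
        simp only [h5, h6]
        omega
      rw [e1, e2, e3]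
      simp only [pow_add, pow_one]
      ring
    · have hnle : ¬ a ≤ c := hle
      have hcle : c ≤ a := le_of_not_ge hle
      have e2 : Ncnt (Function.update f a 2) c = Ncnt f c := by
        have := ncnt_update f a c 2
        simp [hnle] at this
        omega
      have e4 : Ncnt (Function.update f c (g c)) a + 1 = Ncnt f a := by
        have := ncnt_update f c a (g c)
        simp [hcle, hfc, fun h : g c = 2 => hgc h] at this
        omega
      have e3 : Ncnt g a = Ncnt f a := by
        have h5 := congrArg (fun t : Face n => Ncnt t a) hge
        have h6 := ncnt_update (Function.update f c (g c)) a a 2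
        have hea2 : Function.update f c (g c) a ≠ 2 := by rw [hea]; exact hfa
        simp [hea2] at h6
        simp only [h5, h6]
        omega
      rw [e1, e2, e3]
      simp only [pow_add, pow_one]
      ring
  · rw [if_neg hC]
    have hD : ¬(Adj c (Function.update f c (g c)) f ∧ Adj a (Function.update f c (g c)) g) := by
      rintro ⟨⟨hfc, hec, -⟩, ⟨hga, hea, hrest⟩⟩
      rw [Function.update_self] at hec
      rw [Function.update_of_ne hac] at hea
      apply hC
      refine ⟨⟨Function.update_self a 2 f, hea, fun b hb => (Function.update_of_ne hb _ _).symm⟩,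
        ⟨by rw [Function.update_of_ne hca]; exact hfc, hec, fun b hb => ?_⟩⟩
      rcases eq_or_ne b a with rfl | hba
      · rw [Function.update_self, hga]
      · rw [Function.update_of_ne hba]
        have h1 := hrest b hba
        rcases eq_or_ne b c with rfl | hbc
        · exact absurd (by rw [Function.update_self] at h1; exact h1.symm) (fun h => hb rfl)
        · rw [Function.update_of_ne hbc] at h1
          exact h1.symm
    rw [if_neg hD, add_zero]

end AuxB
section AuxC
variable {n : ℕ} (q x y : Fin n → ℝ)

lemma fin3_cases (v : Fin 3) : v = 0 ∨ v = 1 ∨ v = 2 := by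
  fin_cases v <;> simp

lemma K2 (f g : Face n) (a : Fin n) :
    Ut q x y f g a a + Dt q x y f g a a =
      (if EqOff a f g then ell q x y a (f a) (g a) else 0) := by
  by_cases hEq : EqOff a f g
  · rw [if_pos hEq]
    by_cases hf2 : f a = 2 <;> by_cases hg2 : g a = 2
    · -- star-star: f = g
      have hfg : f = g := funext fun b => by
        rcases eq_or_ne b a with rfl | hb
        · rw [hf2, hg2]
        · exact hEq b hb
      subst hfg
      rw [Ut, if_neg (fun hC => hC.1.2.1 hf2), zero_add, Dt, Fin.sum_univ_three]
      have hadj : ∀ v : Fin 3, v ≠ 2 → Adj a (Function.update f a v) f := fun v hv =>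
        ⟨hf2, by rw [Function.update_self]; exact hv,
          fun b hb => Function.update_of_ne hb _ _⟩
      rw [if_pos ⟨hadj 0 (by decide), hadj 0 (by decide)⟩,
        if_pos ⟨hadj 1 (by decide), hadj 1 (by decide)⟩,
        if_neg (fun hC => hC.1.2.1 (Function.update_self a 2 f)), add_zero]
      simp only [sw, Function.update_self]
      norm_num
      rw [sq_sign, sq_sign, ell, if_pos hf2, if_pos hf2, lam]
      ring
    · -- f a = 2, g a ≠ 2
      rw [Ut, if_neg (fun hC => hC.1.2.1 hf2), Dt, zero_add,
        Finset.sum_eq_zero (fun v _ => if_neg (fun hC => hg2 hC.2.1)),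
        ell, if_pos hf2, if_neg hg2]
    · -- f a ≠ 2, g a = 2
      rw [Ut, if_neg (fun hC => hC.2.2.1 hg2), Dt, zero_add,
        Finset.sum_eq_zero (fun v _ => if_neg (fun hC => hf2 hC.1.1)),
        ell, if_neg hf2, if_pos hg2]
    · -- both nonstar
      have hU : Adj a f (Function.update f a 2) ∧ Adj a g (Function.update f a 2) :=
        ⟨⟨Function.update_self a 2 f, hf2, fun b hb => (Function.update_of_ne hb _ _).symm⟩,
         ⟨Function.update_self a 2 f, hg2, fun b hb => by
            rw [Function.update_of_ne hb]; exact (hEq b hb).symm⟩⟩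
      rw [Ut, if_pos hU, Dt,
        Finset.sum_eq_zero (fun v _ => if_neg (fun hC => hf2 hC.1.1)), add_zero]
      simp only [sw]
      rw [mul_mul_mul_comm, neg_one_pow_twice]
      rcases fin3_cases (f a) with hfa | hfa | hfa <;>
        rcases fin3_cases (g a) with hga | hga | hga <;>
          first
            | exact absurd hfa hf2
            | exact absurd hga hg2
            | (simp [hfa, hga, ell]; try ring)
  · rw [if_neg hEq, Ut, Dt]
    have hU : ¬(Adj a f (Function.update f a 2) ∧ Adj a g (Function.update f a 2)) :=
      fun hC => hEq (fun b hb => by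
        have h3 := hC.2.2.2 b hb
        rw [Function.update_of_ne hb] at h3
        exact h3.symm)
    rw [if_neg hU, zero_add,
      Finset.sum_eq_zero (fun v _ => if_neg (fun hC => hEq (fun b hb =>
        ((hC.1.2.2 b hb).symm.trans (hC.2.2.2 b hb)))))]

lemma main_entry (f g : Face n) :
    (∑ h : Face n, Bfull q x y f h * Bfull q x y g h) +
      (∑ e : Face n, Bfull q x y e f * Bfull q x y e g) =
      ∑ i, if EqOff i f g then ell q x y i (f i) (g i) else 0 := by
  rw [U_eq, D_eq,
    show (∑ a, ∑ c, Dt q x y f g a c) = ∑ a, ∑ c, Dt q x y f g c a from Finset.sum_comm,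
    ← Finset.sum_add_distrib]
  refine Finset.sum_congr rfl fun a _ => ?_
  rw [← Finset.sum_add_distrib,
    Finset.sum_eq_single a (fun c _ hc => K1 q x y f g (Ne.symm hc)) (by simp)]
  exact K2 q x y f g a

lemma wLtot_apply (k : ℕ) (f g : {f // f ∈ faceSet (Finset.univ : Finset (Face n)) k}) :
    wLtot q x y k f g =
      ∑ i, if EqOff i f.1 g.1 then ell q x y i (f.1 i) (g.1 i) else 0 := by
  rw [wLtot, Matrix.add_apply, wLud_apply, wLdu_apply, main_entry]

end AuxC
section AuxD
variable {n : ℕ} (q x y : Fin n → ℝ)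

noncomputable def pmat (i : Fin n) (r s : Fin 3) : ℝ :=
  if q i = 0 then (if r = s then 1 else 0)
  else
    if s = 2 then (if r = 2 then 1 else 0)
    else if r = 2 then 0
    else if s = 0 then (if r = 0 then q i / y i else q i / x i)
    else (if r = 0 then q i / x i else -(q i / y i))

noncomputable def pinv (i : Fin n) (r s : Fin 3) : ℝ :=
  if q i = 0 then (if r = s then 1 else 0)
  else
    if s = 2 then (if r = 2 then 1 else 0)
    else if r = 2 then 0
    else (if r = 0 then (if s = 0 then q i / y i else q i / x i)
      else (if s = 0 then q i / x i else -(q i / y i))) / lam q x y i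

lemma eigen (i : Fin n) (r s : Fin 3) :
    ∑ c : Fin 3, ell q x y i r c * pmat q x y i c s =
      (if s = 0 then 0 else lam q x y i) * pmat q x y i r s := by
  by_cases hq : q i = 0
  · fin_cases r <;> fin_cases s <;>
      simp [ell, lam, pmat, hq, Fin.sum_univ_three]
  · fin_cases r <;> fin_cases s <;>
      simp [ell, lam, pmat, hq, Fin.sum_univ_three] <;> ring
set_option maxHeartbeats 1000000 in
lemma pmul (hx : ∀ i, x i ≠ 0) (hy : ∀ i, y i ≠ 0) (i : Fin n) (r s : Fin 3) :
    ∑ c : Fin 3, pmat q x y i r c * pinv q x y i c s = if r = s then 1 else 0 := by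
  by_cases hq : q i = 0
  · fin_cases r <;> fin_cases s <;> simp [pmat, pinv, hq, Fin.sum_univ_three]
  · have ha : q i / x i ≠ 0 := div_ne_zero hq (hx i)
    have hb : q i / y i ≠ 0 := div_ne_zero hq (hy i)
    have hlam : lam q x y i ≠ 0 := by
      have h1 : 0 < (q i / x i) ^ 2 + (q i / y i) ^ 2 := by positivity
      rw [lam]; exact ne_of_gt h1
    have hlam' : (q i / x i) ^ 2 + (q i / y i) ^ 2 ≠ 0 := by rw [lam] at hlam; exact hlam
    have hq' : q i ≠ 0 := hq
    have hx' := hx i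
    have hy' := hy i
    have hd1 : q i ^ 2 * x i ^ 2 * y i ^ 2 + q i ^ 2 * y i ^ 4 ≠ 0 := by positivity
    have hd2 : q i ^ 2 * x i ^ 2 * y i ^ 2 + q i ^ 2 * x i ^ 4 ≠ 0 := by positivity
    fin_cases r <;> fin_cases s <;>
      simp [pmat, pinv, hq, Fin.sum_univ_three] <;>
      rw [lam] <;>
      field_simp [hx i, hy i, hlam', hd1, hd2] <;>
      ring

lemma pmat_star_right (i : Fin n) (r : Fin 3) :
    pmat q x y i r 2 = if r = 2 then 1 else 0 := by
  by_cases hq : q i = 0 <;> simp [pmat, hq]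

lemma pmat_star_left (i : Fin n) {s : Fin 3} (h : s ≠ 2) :
    pmat q x y i 2 s = 0 := by
  by_cases hq : q i = 0 <;> simp [pmat, hq, Ne.symm h, h]

lemma prod_pmat_dim {f t : Face n} (h : (∏ i, pmat q x y i (f i) (t i)) ≠ 0) :
    fdim f = fdim t := by
  have key : ∀ i, f i = 2 ↔ t i = 2 := by
    intro i
    have hi : pmat q x y i (f i) (t i) ≠ 0 := fun h0 => h (Finset.prod_eq_zero (Finset.mem_univ i) h0)
    constructor
    · intro hf
      by_contra ht
      exact hi (hf ▸ pmat_star_left q x y i ht)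
    · intro ht
      by_contra hf
      rw [ht, pmat_star_right, if_neg hf] at hi
      exact hi rfl
  unfold fdim dir
  congr 1
  ext i
  simp [key i]

end AuxD
section AuxE
variable {n : ℕ} (q x y : Fin n → ℝ) (k : ℕ)

abbrev KFace (n k : ℕ) := {f // f ∈ faceSet (Finset.univ : Finset (Face n)) k}

noncomputable def Pmat : Matrix (KFace n k) (KFace n k) ℝ :=
  Matrix.of fun f t => ∏ i, pmat q x y i (f.1 i) (t.1 i)

noncomputable def Qmat : Matrix (KFace n k) (KFace n k) ℝ :=
  Matrix.of fun t g => ∏ i, pinv q x y i (t.1 i) (g.1 i)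

noncomputable def uD (t : Face n) : ℝ := ∑ i, if t i = 0 then 0 else lam q x y i

noncomputable def Dmat : Matrix (KFace n k) (KFace n k) ℝ :=
  Matrix.diagonal fun t => uD q x y t.1

lemma LP_eq_PD : wLtot q x y k * Pmat q x y k = Pmat q x y k * Dmat q x y k := by
  ext f t
  have ht : fdim t.1 = k := mem_faceSet_univ.mp t.2
  rw [Matrix.mul_apply]
  have step0 : ∀ g : KFace n k, wLtot q x y k f g * Pmat q x y k g t =
      (∑ i, if EqOff i f.1 g.1 then ell q x y i (f.1 i) (g.1 i) else 0) *
        ∏ i, pmat q x y i (g.1 i) (t.1 i) := fun g => by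
    rw [wLtot_apply]; rfl
  simp only [step0]
  rw [sum_subtype_faceSet k
    (fun g => (∑ i, if EqOff i f.1 g then ell q x y i (f.1 i) (g i) else 0) *
      ∏ i, pmat q x y i (g i) (t.1 i))
    (fun g hg => by
      have h2 : (∏ i, pmat q x y i (g i) (t.1 i)) ≠ 0 := right_ne_zero_of_mul hg
      rw [prod_pmat_dim q x y h2, ht])]
  have swap : (∑ g : Face n,
      (∑ i, if EqOff i f.1 g then ell q x y i (f.1 i) (g i) else 0) *
        ∏ j, pmat q x y j (g j) (t.1 j)) =
      ∑ i, ∑ g : Face n,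
        if EqOff i f.1 g then
          ell q x y i (f.1 i) (g i) * ∏ j, pmat q x y j (g j) (t.1 j) else 0 := by
    rw [show (∑ g : Face n,
        (∑ i, if EqOff i f.1 g then ell q x y i (f.1 i) (g i) else 0) *
          ∏ j, pmat q x y j (g j) (t.1 j)) =
        ∑ g : Face n, ∑ i, (if EqOff i f.1 g then
          ell q x y i (f.1 i) (g i) * ∏ j, pmat q x y j (g j) (t.1 j) else 0) from
      Finset.sum_congr rfl fun g _ => by
        rw [Finset.sum_mul]
        exact Finset.sum_congr rfl fun i _ => by rw [ite_mul, zero_mul]]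
    exact Finset.sum_comm
  rw [swap]
  have collapse : ∀ i : Fin n,
      (∑ g : Face n, if EqOff i f.1 g then
        ell q x y i (f.1 i) (g i) * ∏ j, pmat q x y j (g j) (t.1 j) else 0) =
      ∑ v : Fin 3, ell q x y i (f.1 i) v *
        ∏ j, pmat q x y j (Function.update f.1 i v j) (t.1 j) := by
    intro i
    have expand : ∀ g : Face n,
        (if EqOff i f.1 g then
          ell q x y i (f.1 i) (g i) * ∏ j, pmat q x y j (g j) (t.1 j) else 0) =
        ∑ v : Fin 3, if g i = v ∧ EqOff i f.1 g then
          ell q x y i (f.1 i) (g i) * ∏ j, pmat q x y j (g j) (t.1 j) else 0 := by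
      intro g
      rw [sum_ite_unique (fun v => g i = v ∧ EqOff i f.1 g) (g i) (fun v hv => hv.1.symm)]
      simp
    simp only [expand]
    rw [Finset.sum_comm]
    refine Finset.sum_congr rfl fun v _ => ?_
    rw [sum_ite_unique (fun g => g i = v ∧ EqOff i f.1 g) (Function.update f.1 i v)
      (fun g hg => funext fun b => by
        rcases eq_or_ne b i with rfl | hb
        · rw [Function.update_self, hg.1]
        · rw [Function.update_of_ne hb]; exact (hg.2 b hb).symm)]
    rw [if_pos ⟨Function.update_self i v f.1,
      fun j hj => (Function.update_of_ne hj _ _).symm⟩]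
    rw [Function.update_self]
  simp only [collapse]
  have prodsplit : ∀ (i : Fin n) (v : Fin 3),
      (∏ j, pmat q x y j (Function.update f.1 i v j) (t.1 j)) =
        pmat q x y i v (t.1 i) *
          ∏ j ∈ Finset.univ.erase i, pmat q x y j (f.1 j) (t.1 j) := by
    intro i v
    rw [← Finset.mul_prod_erase Finset.univ _ (Finset.mem_univ i), Function.update_self]
    congr 1
    exact Finset.prod_congr rfl fun j hj => by
      rw [Function.update_of_ne (Finset.mem_erase.mp hj).1]
  have eigenstep : ∀ i : Fin n,
      (∑ v : Fin 3, ell q x y i (f.1 i) v *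
        ∏ j, pmat q x y j (Function.update f.1 i v j) (t.1 j)) =
      (if t.1 i = 0 then 0 else lam q x y i) *
        ∏ j, pmat q x y j (f.1 j) (t.1 j) := by
    intro i
    simp only [prodsplit i]
    rw [show (∑ v : Fin 3, ell q x y i (f.1 i) v * (pmat q x y i v (t.1 i) *
        ∏ j ∈ Finset.univ.erase i, pmat q x y j (f.1 j) (t.1 j))) =
        (∑ v : Fin 3, ell q x y i (f.1 i) v * pmat q x y i v (t.1 i)) *
          ∏ j ∈ Finset.univ.erase i, pmat q x y j (f.1 j) (t.1 j) from by
      rw [Finset.sum_mul]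
      exact Finset.sum_congr rfl fun v _ => by ring]
    rw [eigen q x y i (f.1 i) (t.1 i), mul_assoc]
    congr 1
    exact Finset.mul_prod_erase Finset.univ
      (fun j => pmat q x y j (f.1 j) (t.1 j)) (Finset.mem_univ i)
  simp only [eigenstep]
  rw [← Finset.sum_mul]
  show _ = (Pmat q x y k * Dmat q x y k) f t
  rw [Dmat, Matrix.mul_diagonal]
  rw [mul_comm]
  rfl

lemma PQ_eq_one (hx : ∀ i, x i ≠ 0) (hy : ∀ i, y i ≠ 0) :
    Pmat q x y k * Qmat q x y k = 1 := by
  ext f t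
  have hf : fdim f.1 = k := mem_faceSet_univ.mp f.2
  rw [Matrix.mul_apply, Matrix.one_apply]
  have step0 : ∀ g : KFace n k, Pmat q x y k f g * Qmat q x y k g t =
      (∏ i, pmat q x y i (f.1 i) (g.1 i)) * ∏ i, pinv q x y i (g.1 i) (t.1 i) :=
    fun g => rfl
  simp only [step0]
  rw [sum_subtype_faceSet k
    (fun g => (∏ i, pmat q x y i (f.1 i) (g i)) * ∏ i, pinv q x y i (g i) (t.1 i))
    (fun g hg => by
      have h2 : (∏ i, pmat q x y i (f.1 i) (g i)) ≠ 0 := left_ne_zero_of_mul hg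
      rw [← prod_pmat_dim q x y h2, hf])]
  rw [show (∑ g : Face n,
      (∏ i, pmat q x y i (f.1 i) (g i)) * ∏ i, pinv q x y i (g i) (t.1 i)) =
      ∑ g : Face n, ∏ i, (pmat q x y i (f.1 i) (g i) * pinv q x y i (g i) (t.1 i)) from
    Finset.sum_congr rfl fun g _ => (Finset.prod_mul_distrib).symm]
  rw [← Fintype.prod_sum (fun i c => pmat q x y i (f.1 i) c * pinv q x y i c (t.1 i))]
  rw [show (∏ i, ∑ c : Fin 3, pmat q x y i (f.1 i) c * pinv q x y i c (t.1 i)) =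
      ∏ i, (if f.1 i = t.1 i then (1:ℝ) else 0) from
    Finset.prod_congr rfl fun i _ => pmul q x y hx hy i (f.1 i) (t.1 i)]
  by_cases hft : f = t
  · subst hft
    simp
  · rw [if_neg hft]
    have hne : f.1 ≠ t.1 := fun h => hft (Subtype.ext h)
    obtain ⟨i, hi⟩ := Function.ne_iff.mp hne
    exact Finset.prod_eq_zero (Finset.mem_univ i) (if_neg hi)

end AuxE
section AuxF
open Polynomial
variable {n : ℕ} (q x y : Fin n → ℝ) (k : ℕ)

lemma charpoly_conj (hx : ∀ i, x i ≠ 0) (hy : ∀ i, y i ≠ 0) :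
    (wLtot q x y k).charpoly = (Dmat q x y k).charpoly := by
  have hPQ := PQ_eq_one q x y k hx hy
  have hL : wLtot q x y k = Pmat q x y k * Dmat q x y k * Qmat q x y k := by
    calc wLtot q x y k = wLtot q x y k * (Pmat q x y k * Qmat q x y k) := by
          rw [hPQ, mul_one]
      _ = wLtot q x y k * Pmat q x y k * Qmat q x y k := by rw [mul_assoc]
      _ = Pmat q x y k * Dmat q x y k * Qmat q x y k := by rw [LP_eq_PD]
  have hPQc : (Pmat q x y k).map Polynomial.C * (Qmat q x y k).map Polynomial.C = 1 := by
    rw [← Matrix.map_mul, hPQ]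
    exact Matrix.map_one _ (map_zero _) (map_one _)
  have key : Matrix.charmatrix (Pmat q x y k * Dmat q x y k * Qmat q x y k) =
      (Pmat q x y k).map Polynomial.C * Matrix.charmatrix (Dmat q x y k) *
        (Qmat q x y k).map Polynomial.C := by
    rw [Matrix.charmatrix, Matrix.charmatrix, mul_sub, sub_mul]
    congr 1
    · have comm := Matrix.scalar_commute (n := KFace n k) (X : Polynomial ℝ)
        (fun r => Commute.all _ _) ((Pmat q x y k).map Polynomial.C)
      calc Matrix.scalar (KFace n k) (X : Polynomial ℝ)
          = Matrix.scalar (KFace n k) (X : Polynomial ℝ) *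
              ((Pmat q x y k).map Polynomial.C * (Qmat q x y k).map Polynomial.C) := by
            rw [hPQc, mul_one]
        _ = (Pmat q x y k).map Polynomial.C * Matrix.scalar (KFace n k) (X : Polynomial ℝ) *
              (Qmat q x y k).map Polynomial.C := by
            rw [← mul_assoc, comm.eq]
    · simp only [RingHom.mapMatrix_apply, Matrix.map_mul]
  rw [Matrix.charpoly, Matrix.charpoly, hL, key, Matrix.det_mul, Matrix.det_mul]
  calc ((Pmat q x y k).map Polynomial.C).det * (Matrix.charmatrix (Dmat q x y k)).det *
        ((Qmat q x y k).map Polynomial.C).det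
      = ((Pmat q x y k).map Polynomial.C).det * ((Qmat q x y k).map Polynomial.C).det *
          (Matrix.charmatrix (Dmat q x y k)).det := by ring
    _ = (Matrix.charmatrix (Dmat q x y k)).det := by
        rw [← Matrix.det_mul, hPQc, Matrix.det_one, one_mul]

lemma charpoly_Dmat :
    (Dmat q x y k).charpoly = ∏ t : KFace n k, ((X : ℝ[X]) - C (uD q x y t.1)) := by
  rw [Matrix.charpoly]
  have hcm : Matrix.charmatrix (Dmat q x y k) =
      Matrix.diagonal (fun t : KFace n k => (X : ℝ[X]) - C (uD q x y t.1)) := by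
    ext i j
    by_cases hij : i = j
    · subst hij
      rw [Matrix.charmatrix_apply_eq, Matrix.diagonal_apply_eq, Dmat,
        Matrix.diagonal_apply_eq]
    · rw [Matrix.charmatrix_apply_ne _ _ _ hij, Matrix.diagonal_apply_ne _ hij, Dmat,
        Matrix.diagonal_apply_ne _ hij, map_zero, neg_zero]
  rw [hcm, Matrix.det_diagonal]

def suppC (t : Face n) : Finset (Fin n) := Finset.univ.filter fun i => t i ≠ 0

lemma fiber_card (C : Finset (Fin n)) :
    (Finset.univ.filter fun t : KFace n k => suppC t.1 = C).card = C.card.choose k := by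
  rw [← Finset.card_powersetCard k C]
  refine Finset.card_bij' (fun t _ => dir t.1)
    (fun S hS => ⟨fun i => if i ∈ S then 2 else if i ∈ C then 1 else 0, ?_⟩) ?_ ?_ ?_ ?_
  · -- membership of constructed face in faceSet univ k
    rw [mem_faceSet_univ]
    have hS' := Finset.mem_powersetCard.mp hS
    have hdir : dir (fun i => if i ∈ S then (2 : Fin 3) else if i ∈ C then 1 else 0) = S := by
      ext i
      simp only [dir, Finset.mem_filter, Finset.mem_univ, true_and]
      by_cases h1 : i ∈ S <;> by_cases h2 : i ∈ C <;> simp [h1, h2]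
    rw [fdim, hdir, hS'.2]
  · -- i maps into powersetCard
    intro t ht
    rw [Finset.mem_powersetCard]
    simp only [Finset.mem_filter, Finset.mem_univ, true_and] at ht
    constructor
    · intro i hi
      simp only [dir, Finset.mem_filter, Finset.mem_univ, true_and] at hi
      rw [← ht]
      simp only [suppC, Finset.mem_filter, Finset.mem_univ, true_and, hi]
      decide
    · exact mem_faceSet_univ.mp t.2
  · -- j maps into fiber
    intro S hS
    simp only [Finset.mem_filter, Finset.mem_univ, true_and]
    have hS' := Finset.mem_powersetCard.mp hS
    ext i
    simp only [suppC, Finset.mem_filter, Finset.mem_univ, true_and]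
    by_cases h1 : i ∈ S
    · simp [h1, hS'.1 h1]
    · by_cases h2 : i ∈ C <;> simp [h1, h2]
  · -- left inverse
    intro t ht
    simp only [Finset.mem_filter, Finset.mem_univ, true_and] at ht
    apply Subtype.ext
    funext i
    simp only
    by_cases h1 : i ∈ dir t.1
    · simp only [dir, Finset.mem_filter, Finset.mem_univ, true_and] at h1
      simp [dir, h1]
    · have h1' : t.1 i ≠ 2 := by
        simp only [dir, Finset.mem_filter, Finset.mem_univ, true_and] at h1
        exact h1
      rw [if_neg h1]
      by_cases h2 : i ∈ C
      · rw [if_pos h2]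
        rw [← ht] at h2
        simp only [suppC, Finset.mem_filter, Finset.mem_univ, true_and] at h2
        rcases fin3_cases (t.1 i) with h | h | h
        · exact absurd h h2
        · exact h.symm
        · exact absurd h h1'
      · rw [if_neg h2, ← ht] at *
        simp only [suppC, Finset.mem_filter, Finset.mem_univ, true_and] at h2
        push_neg at h2
        exact h2.symm
  · -- right inverse
    intro S hS
    ext i
    simp only [dir, Finset.mem_filter, Finset.mem_univ, true_and]
    by_cases h1 : i ∈ S <;> by_cases h2 : i ∈ C <;> simp [h1, h2]

lemma prod_reindex :
    (∏ t : KFace n k, ((X : ℝ[X]) - C (uD q x y t.1))) =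
      ∏ Cs : Finset (Fin n),
        ((X : ℝ[X]) - C (∑ j ∈ Cs, lam q x y j)) ^ (Cs.card.choose k) := by
  have h1 : ∀ t : KFace n k, uD q x y t.1 = ∑ j ∈ suppC t.1, lam q x y j := by
    intro t
    rw [uD, suppC, Finset.sum_filter]
    exact Finset.sum_congr rfl fun i _ => by by_cases h : t.1 i = 0 <;> simp [h]
  simp only [h1]
  rw [← Finset.prod_fiberwise_of_maps_to
    (g := fun t : KFace n k => suppC t.1) (t := Finset.univ)
    (fun t _ => Finset.mem_univ _)
    (fun t => (X : ℝ[X]) - C (∑ j ∈ suppC t.1, lam q x y j))]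
  refine Finset.prod_congr rfl fun Cs _ => ?_
  rw [← fiber_card k Cs]
  rw [show (∏ t ∈ Finset.univ.filter fun t : KFace n k => suppC t.1 = Cs,
      ((X : ℝ[X]) - C (∑ j ∈ suppC t.1, lam q x y j))) =
      ∏ t ∈ Finset.univ.filter fun t : KFace n k => suppC t.1 = Cs,
        ((X : ℝ[X]) - C (∑ j ∈ Cs, lam q x y j)) from
    Finset.prod_congr rfl fun t ht => by
      rw [(Finset.mem_filter.mp ht).2]]
  rw [Finset.prod_const]

end AuxF
/-- **Algebraically weighted total Laplacian spectra of cubes** (Duval–Klivans–Martin,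
Thm. 4.1, eqn. (4.3)).  With `u_C = Σ_{j ∈ C} (q_j²/x_j² + q_j²/y_j²)`, the
characteristic polynomial of `L̂^tot_k(Q_n)` equals
`∏_{C ⊆ [n]} (y - u_C)^{binom(|C|, k)}`. -/
theorem weighted_cube_total_spectrum (n : ℕ) (hn : 1 ≤ n)
    (q x y : Fin n → ℝ) (hx : ∀ i, x i ≠ 0) (hy : ∀ i, y i ≠ 0)
    (k : ℕ) (hk : k ≤ n) :
    (wLtot q x y k).charpoly =
      ∏ C : Finset (Fin n),
        (Polynomial.X -
            Polynomial.C (∑ j ∈ C, (q j ^ 2 / x j ^ 2 + q j ^ 2 / y j ^ 2))) ^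
          (C.card.choose k) := by
  rw [charpoly_conj q x y k hx hy, charpoly_Dmat q x y k, prod_reindex q x y k]
  refine Finset.prod_congr rfl fun Cs _ => ?_
  have hsum : (∑ j ∈ Cs, lam q x y j) =
      ∑ j ∈ Cs, (q j ^ 2 / x j ^ 2 + q j ^ 2 / y j ^ 2) :=
    Finset.sum_congr rfl fun j _ => by rw [lam, div_pow, div_pow]
  rw [hsum]

end CubicalPaper
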